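/- The nth Catalan number C_n equals the number of pairs of integer sequences i_1 > i_2 > ⋯ > i_s > 0 and 0 < j_1 < j_2 < ⋯ < j_s (the common length s ≥ 0 being arbitrary) such that i_k + j_k ≤ n for all k = 1,…,s. Moreover, for each fixed s, the number of such pairs of sequences of length s equals the Narayana number N(n,s+1) = (1/n)·C(n,s)·C(n,s+1). -/

import Mathlib

open Finset

/-- domination: B has at most as many elements `≤ x` as A, for every x. -/
def Dm (A B : Finset ℕ) : Prop := ∀ x : ℕ, (B.filter (· ≤ x)).card ≤ (A.filter (· ≤ x)).card

open Classical in
noncomputable def Pp (m s t : ℕ) : Finset (Finset ℕ × Finset ℕ) :=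
  ((range m).powerset ×ˢ (range m).powerset).filter
    (fun p => p.1.card = s ∧ p.2.card = t ∧ Dm p.1 p.2)

lemma mem_Pp {m s t : ℕ} {p : Finset ℕ × Finset ℕ} :
    p ∈ Pp m s t ↔ p.1 ⊆ range m ∧ p.2 ⊆ range m ∧ p.1.card = s ∧ p.2.card = t ∧ Dm p.1 p.2 := by
  simp [Pp, Finset.mem_filter, Finset.mem_product, and_assoc]

lemma Dm.le_card {A B : Finset ℕ} {m : ℕ} (h : Dm A B) (hA : A ⊆ range m) (hB : B ⊆ range m) :
    B.card ≤ A.card := by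
  have := h m
  rwa [Finset.filter_true_of_mem, Finset.filter_true_of_mem] at this
  · exact fun a ha => le_of_lt (mem_range.1 (hA ha))
  · exact fun a ha => le_of_lt (mem_range.1 (hB ha))

lemma Pp_card_le {m s t : ℕ} {p : Finset ℕ × Finset ℕ} (h : p ∈ Pp m s t) : t ≤ s := by
  rw [mem_Pp] at h
  obtain ⟨h1, h2, h3, h4, h5⟩ := h
  subst h3 h4; exact h5.le_card h1 h2

-- monotonicity
lemma Dm.mono_left {A A' B : Finset ℕ} (h : Dm A B) (hs : A ⊆ A') : Dm A' B :=
  fun x => (h x).trans (Finset.card_le_card (Finset.filter_subset_filter _ hs))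

lemma Dm.mono_right {A B B' : Finset ℕ} (h : Dm A B) (hs : B' ⊆ B) : Dm A B' :=
  fun x => le_trans (Finset.card_le_card (Finset.filter_subset_filter _ hs)) (h x)

lemma Dm.empty (A : Finset ℕ) : Dm A ∅ := fun x => by simp

-- erase top from the left set
lemma Dm.erase_left {m : ℕ} {A B : Finset ℕ} (h : Dm A B) (hA : A ⊆ range (m + 1))
    (hB : B ⊆ range m) : Dm (A.erase m) B := by
  intro x
  rcases lt_or_ge x m with hx | hx
  · have : (A.erase m).filter (· ≤ x) = A.filter (· ≤ x) := by
      ext a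
      simp only [Finset.mem_filter, Finset.mem_erase]
      constructor
      · rintro ⟨⟨_, ha⟩, hax⟩; exact ⟨ha, hax⟩
      · rintro ⟨ha, hax⟩; exact ⟨⟨by omega, ha⟩, hax⟩
    rw [this]; exact h x
  · -- x ≥ m : B.filter = B, and use h at m-1 (or B = ∅ if m = 0)
    rcases Nat.eq_zero_or_pos m with rfl | hm
    · simp only [Finset.range_zero, Finset.subset_empty] at hB
      subst hB; simp
    · have hBx : B.filter (· ≤ x) = B :=
        Finset.filter_true_of_mem (fun a ha => by have := mem_range.1 (hB ha); omega)
      have hBx' : B.filter (· ≤ m - 1) = B :=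
        Finset.filter_true_of_mem (fun a ha => by have := mem_range.1 (hB ha); omega)
      have h1 := h (m - 1)
      rw [hBx', ] at h1
      have h2 : A.filter (· ≤ m - 1) ⊆ (A.erase m).filter (· ≤ x) := by
        intro a ha
        simp only [Finset.mem_filter, Finset.mem_erase] at ha ⊢
        exact ⟨⟨by omega, ha.1⟩, by omega⟩
      rw [hBx]
      exact h1.trans (Finset.card_le_card h2)

-- insert top into the left set
lemma Dm.insert_left {m : ℕ} {A B : Finset ℕ} (h : Dm A B) : Dm (insert m A) B :=
  h.mono_left (Finset.subset_insert _ _)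

-- insert top into right set, given enough room
lemma Dm.insert_right {m : ℕ} {A B : Finset ℕ} (h : Dm A B) (hA : A ⊆ range m)
    (hB : B ⊆ range m) (hcard : B.card < A.card) : Dm A (insert m B) := by
  intro x
  rcases lt_or_ge x m with hx | hx
  · have : (insert m B).filter (· ≤ x) = B.filter (· ≤ x) := by
      rw [Finset.filter_insert, if_neg (by omega)]
    rw [this]; exact h x
  · have hBx : (insert m B).filter (· ≤ x) = insert m (B.filter (· ≤ x)) := by
      rw [Finset.filter_insert, if_pos hx]
    have hmB : m ∉ B.filter (· ≤ x) := fun hc => by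
      have := mem_range.1 (hB (Finset.mem_filter.1 hc).1); omega
    rw [hBx, Finset.card_insert_of_notMem hmB]
    have hBfull : B.filter (· ≤ x) = B :=
      Finset.filter_true_of_mem (fun a ha => by have := mem_range.1 (hB ha); omega)
    have hAfull : A.filter (· ≤ x) = A :=
      Finset.filter_true_of_mem (fun a ha => by have := mem_range.1 (hA ha); omega)
    rw [hBfull, hAfull]; omega

lemma Dm.insert_both {m : ℕ} {A B : Finset ℕ} (h : Dm A B) (hA : A ⊆ range m)
    (hB : B ⊆ range m) (hcard : B.card ≤ A.card) : Dm (insert m A) (insert m B) := by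
  intro x
  rcases lt_or_ge x m with hx | hx
  · have e1 : (insert m B).filter (· ≤ x) = B.filter (· ≤ x) := by
      rw [Finset.filter_insert, if_neg (by omega)]
    have e2 : (insert m A).filter (· ≤ x) = A.filter (· ≤ x) := by
      rw [Finset.filter_insert, if_neg (by omega)]
    rw [e1, e2]; exact h x
  · have e1 : (insert m B).filter (· ≤ x) = insert m (B.filter (· ≤ x)) := by
      rw [Finset.filter_insert, if_pos hx]
    have e2 : (insert m A).filter (· ≤ x) = insert m (A.filter (· ≤ x)) := by
      rw [Finset.filter_insert, if_pos hx]
    have hmB : m ∉ B.filter (· ≤ x) := fun hc => by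
      have := mem_range.1 (hB (Finset.mem_filter.1 hc).1); omega
    have hmA : m ∉ A.filter (· ≤ x) := fun hc => by
      have := mem_range.1 (hA (Finset.mem_filter.1 hc).1); omega
    rw [e1, e2, Finset.card_insert_of_notMem hmB, Finset.card_insert_of_notMem hmA]
    have hBfull : B.filter (· ≤ x) = B :=
      Finset.filter_true_of_mem (fun a ha => by have := mem_range.1 (hB ha); omega)
    have hAfull : A.filter (· ≤ x) = A :=
      Finset.filter_true_of_mem (fun a ha => by have := mem_range.1 (hA ha); omega)
    rw [hBfull, hAfull]; omega

lemma Pp_zero_right (m s : ℕ) : (Pp m s 0).card = m.choose s := by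
  have : ((range m).powersetCard s).card = m.choose s := by
    rw [Finset.card_powersetCard, Finset.card_range]
  rw [← this]
  apply Finset.card_nbij' (fun p => p.1) (fun A => (A, ∅))
  · intro p hp
    rw [Finset.mem_coe, mem_Pp] at hp
    exact Finset.mem_powersetCard.2 ⟨hp.1, hp.2.2.1⟩
  · intro A hA
    rw [Finset.mem_coe, Finset.mem_powersetCard] at hA
    exact mem_Pp.2 ⟨hA.1, by simp, hA.2, by simp, Dm.empty _⟩
  · intro p hp
    rw [Finset.mem_coe, mem_Pp] at hp
    have : p.2 = ∅ := Finset.card_eq_zero.1 hp.2.2.2.1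
    exact Prod.ext rfl this.symm
  · intro A _; rfl

open Classical in
lemma Pp_rec (m s t : ℕ) (hts : t ≤ s) :
    (Pp (m+1) (s+1) (t+1)).card =
      (Pp m (s+1) (t+1)).card + (Pp m s (t+1)).card + (Pp m (s+1) t).card + (Pp m s t).card := by
  classical
  set Q := Pp (m+1) (s+1) (t+1) with hQ
  have split1 : Q.card = (Q.filter (fun p => m ∈ p.1)).card +
      (Q.filter (fun p => m ∉ p.1)).card := by
    rw [Finset.card_filter_add_card_filter_not]
  have split2 : (Q.filter (fun p => m ∈ p.1)).card =
      ((Q.filter (fun p => m ∈ p.1)).filter (fun p => m ∈ p.2)).card +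
      ((Q.filter (fun p => m ∈ p.1)).filter (fun p => m ∉ p.2)).card := by
    rw [Finset.card_filter_add_card_filter_not]
  have split3 : (Q.filter (fun p => m ∉ p.1)).card =
      ((Q.filter (fun p => m ∉ p.1)).filter (fun p => m ∈ p.2)).card +
      ((Q.filter (fun p => m ∉ p.1)).filter (fun p => m ∉ p.2)).card := by
    rw [Finset.card_filter_add_card_filter_not]
  -- memberships in the refined filters
  have memQ : ∀ p : Finset ℕ × Finset ℕ, p ∈ Q ↔
      p.1 ⊆ range (m+1) ∧ p.2 ⊆ range (m+1) ∧ p.1.card = s+1 ∧ p.2.card = t+1 ∧ Dm p.1 p.2 :=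
    fun p => mem_Pp
  have hsub : ∀ (X : Finset ℕ), X ⊆ range (m+1) → m ∉ X → X ⊆ range m := by
    intro X h hm a ha
    have h1 := mem_range.1 (h ha)
    have : a ≠ m := fun e => hm (e ▸ ha)
    exact mem_range.2 (by omega)
  have hsube : ∀ (X : Finset ℕ), X ⊆ range (m+1) → X.erase m ⊆ range m := by
    intro X h a ha
    rw [Finset.mem_erase] at ha
    have h1 := mem_range.1 (h ha.2)
    exact mem_range.2 (by omega)
  have hsubi : ∀ (X : Finset ℕ), X ⊆ range m → insert m X ⊆ range (m+1) := by
    intro X h a ha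
    rw [Finset.mem_range]
    rcases Finset.mem_insert.1 ha with h' | ha'
    · omega
    · have := mem_range.1 (h ha'); omega
  have hnm : ∀ (X : Finset ℕ), X ⊆ range m → m ∉ X := fun X h hc => by
    have := mem_range.1 (h hc); omega
  -- case 00 : neither contains m
  have c00 : ((Q.filter (fun p => m ∉ p.1)).filter (fun p => m ∉ p.2)).card
      = (Pp m (s+1) (t+1)).card := by
    apply Finset.card_nbij' id id
    · intro p hp
      simp only [Finset.mem_coe, Finset.mem_filter, memQ] at hp
      obtain ⟨⟨⟨h1, h2, h3, h4, h5⟩, hA⟩, hB⟩ := hp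
      exact mem_Pp.2 ⟨hsub _ h1 hA, hsub _ h2 hB, h3, h4, h5⟩
    · intro p hp
      rw [Finset.mem_coe, mem_Pp] at hp
      obtain ⟨h1, h2, h3, h4, h5⟩ := hp
      simp only [Finset.mem_coe, Finset.mem_filter, memQ]
      exact ⟨⟨⟨h1.trans (by intro a; simp only [mem_range]; omega),
        h2.trans (by intro a; simp only [mem_range]; omega), h3, h4, h5⟩,
        hnm _ h1⟩, hnm _ h2⟩
    · intro p _; rfl
    · intro p _; rfl
  -- case 10 : m in A only
  have c10 : ((Q.filter (fun p => m ∈ p.1)).filter (fun p => m ∉ p.2)).card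
      = (Pp m s (t+1)).card := by
    apply Finset.card_nbij' (fun p => (p.1.erase m, p.2)) (fun p => (insert m p.1, p.2))
    · intro p hp
      simp only [Finset.mem_coe, Finset.mem_filter, memQ] at hp
      obtain ⟨⟨⟨h1, h2, h3, h4, h5⟩, hA⟩, hB⟩ := hp
      refine mem_Pp.2 ⟨hsube _ h1, hsub _ h2 hB, ?_, h4, h5.erase_left h1 (hsub _ h2 hB)⟩
      rw [Finset.card_erase_of_mem hA, h3]; omega
    · intro p hp
      rw [Finset.mem_coe, mem_Pp] at hp
      obtain ⟨h1, h2, h3, h4, h5⟩ := hp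
      simp only [Finset.mem_coe, Finset.mem_filter, memQ]
      refine ⟨⟨⟨hsubi _ h1, h2.trans (by intro a; simp only [mem_range]; omega), ?_, h4,
        h5.insert_left⟩, Finset.mem_insert_self m _⟩, hnm _ h2⟩
      rw [Finset.card_insert_of_notMem (hnm _ h1), h3]
    · intro p hp
      simp only [Finset.mem_coe, Finset.mem_filter, memQ] at hp
      exact Prod.ext (Finset.insert_erase hp.1.2) rfl
    · intro p hp
      rw [Finset.mem_coe, mem_Pp] at hp
      exact Prod.ext (Finset.erase_insert (hnm _ hp.1)) rfl
  -- case 01 : m in B only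
  have c01 : ((Q.filter (fun p => m ∉ p.1)).filter (fun p => m ∈ p.2)).card
      = (Pp m (s+1) t).card := by
    apply Finset.card_nbij' (fun p => (p.1, p.2.erase m)) (fun p => (p.1, insert m p.2))
    · intro p hp
      simp only [Finset.mem_coe, Finset.mem_filter, memQ] at hp
      obtain ⟨⟨⟨h1, h2, h3, h4, h5⟩, hA⟩, hB⟩ := hp
      refine mem_Pp.2 ⟨hsub _ h1 hA, hsube _ h2, h3, ?_, h5.mono_right (Finset.erase_subset _ _)⟩
      rw [Finset.card_erase_of_mem hB, h4]; omega
    · intro p hp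
      rw [Finset.mem_coe, mem_Pp] at hp
      obtain ⟨h1, h2, h3, h4, h5⟩ := hp
      simp only [Finset.mem_coe, Finset.mem_filter, memQ]
      refine ⟨⟨⟨h1.trans (by intro a; simp only [mem_range]; omega), hsubi _ h2, h3, ?_,
        h5.insert_right h1 h2 (by rw [h3, h4]; omega)⟩, hnm _ h1⟩, Finset.mem_insert_self m _⟩
      rw [Finset.card_insert_of_notMem (hnm _ h2), h4]
    · intro p hp
      simp only [Finset.mem_coe, Finset.mem_filter, memQ] at hp
      exact Prod.ext rfl (Finset.insert_erase hp.2)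
    · intro p hp
      rw [Finset.mem_coe, mem_Pp] at hp
      exact Prod.ext rfl (Finset.erase_insert (hnm _ hp.2.1))
  -- case 11 : m in both
  have c11 : ((Q.filter (fun p => m ∈ p.1)).filter (fun p => m ∈ p.2)).card
      = (Pp m s t).card := by
    apply Finset.card_nbij' (fun p => (p.1.erase m, p.2.erase m))
      (fun p => (insert m p.1, insert m p.2))
    · intro p hp
      simp only [Finset.mem_coe, Finset.mem_filter, memQ] at hp
      obtain ⟨⟨⟨h1, h2, h3, h4, h5⟩, hA⟩, hB⟩ := hp
      refine mem_Pp.2 ⟨hsube _ h1, hsube _ h2, ?_, ?_,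
        (h5.mono_right (Finset.erase_subset _ _)).erase_left h1 (hsube _ h2)⟩
      · rw [Finset.card_erase_of_mem hA, h3]; omega
      · rw [Finset.card_erase_of_mem hB, h4]; omega
    · intro p hp
      rw [Finset.mem_coe, mem_Pp] at hp
      obtain ⟨h1, h2, h3, h4, h5⟩ := hp
      simp only [Finset.mem_coe, Finset.mem_filter, memQ]
      refine ⟨⟨⟨hsubi _ h1, hsubi _ h2, ?_, ?_,
        h5.insert_both h1 h2 (h5.le_card h1 h2)⟩, Finset.mem_insert_self m _⟩,
        Finset.mem_insert_self m _⟩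
      · rw [Finset.card_insert_of_notMem (hnm _ h1), h3]
      · rw [Finset.card_insert_of_notMem (hnm _ h2), h4]
    · intro p hp
      simp only [Finset.mem_coe, Finset.mem_filter, memQ] at hp
      exact Prod.ext (Finset.insert_erase hp.1.2) (Finset.insert_erase hp.2)
    · intro p hp
      rw [Finset.mem_coe, mem_Pp] at hp
      exact Prod.ext (Finset.erase_insert (hnm _ hp.1)) (Finset.erase_insert (hnm _ hp.2.1))
  omega

lemma Pp_eq_zero {m s t : ℕ} (h : s < t) : (Pp m s t).card = 0 :=
  Finset.card_eq_zero.2 (Finset.eq_empty_of_forall_notMem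
    (fun p hp => absurd (Pp_card_le hp) (by omega)))

lemma Pp_count : ∀ m : ℕ, ∀ s t : ℕ, t ≤ s →
    (Pp m s (t+1)).card + m.choose (s+1) * m.choose t = m.choose s * m.choose (t+1)
  | 0, s, t, hts => by
    have h0 : (Pp 0 s (t+1)).card = 0 := by
      apply Finset.card_eq_zero.2
      apply Finset.eq_empty_of_forall_notMem
      intro p hp
      rw [mem_Pp] at hp
      have : p.2 = ∅ := by
        have := hp.2.1; simpa [Finset.range_zero, Finset.subset_empty] using this
      rw [this] at hp
      simp at hp
    simp [h0, Nat.choose_zero_succ]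
  | (m+1), 0, t, hts => by
    have ht : t = 0 := Nat.le_zero.1 hts
    subst ht
    rw [Pp_eq_zero (by omega)]
    simp [mul_comm]
  | (m+1), (s+1), t, hts => by
    rcases eq_or_lt_of_le hts with rfl | hlt
    · rw [Pp_eq_zero (by omega)]
      simp [mul_comm]
    · have hts' : t ≤ s := by omega
      have hrec := Pp_rec m s t hts'
      have IH1 := Pp_count m (s+1) t (by omega)
      have IH2 := Pp_count m s t hts'
      rcases t with _ | t''
      · -- t = 0
        have L1 := Pp_zero_right m (s+1)
        have L2 := Pp_zero_right m s
        rw [hrec]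
        simp only [Nat.choose_succ_succ, Nat.choose_zero_right, mul_one] at *
        zify at *
        linear_combination IH1 + IH2 + L1 + L2
      · -- t = t'' + 1
        have IH3 := Pp_count m (s+1) t'' (by omega)
        have IH4 := Pp_count m s t'' (by omega)
        rw [hrec]
        simp only [Nat.choose_succ_succ] at *
        zify at *
        linear_combination IH1 + IH2 + IH3 + IH4

/-- A pair of strictly decreasing / strictly increasing sequences of positive integers
`i_1 > … > i_s > 0`, `0 < j_1 < … < j_s` of common length `s` with `i_k + j_k ≤ n`. -/
structure PairData (n s : ℕ) where
  i : Fin s → ℕ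
  j : Fin s → ℕ
  hipos : ∀ k, 0 < i k
  hjpos : ∀ k, 0 < j k
  hi : StrictAnti i
  hj : StrictMono j
  hbound : ∀ k, i k + j k ≤ n

lemma PairData.ext' {n s : ℕ} {d e : PairData n s} (hi : d.i = e.i) (hj : d.j = e.j) :
    d = e := by
  cases d; cases e; cases hi; cases hj; rfl

-- image of a function over univ equals image of its composition with rev
lemma image_rev {s : ℕ} (f : Fin s → ℕ) :
    Finset.image (fun k => f (Fin.rev k)) Finset.univ = Finset.image f Finset.univ := by
  ext x
  simp only [Finset.mem_image, Finset.mem_univ, true_and]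
  constructor
  · rintro ⟨k, rfl⟩; exact ⟨Fin.rev k, rfl⟩
  · rintro ⟨k, rfl⟩; exact ⟨Fin.rev k, by rw [Fin.rev_rev]⟩

lemma filter_image_card {s : ℕ} (f : Fin s → ℕ) (hf : Function.Injective f) (x : ℕ) :
    ((Finset.image f Finset.univ).filter (· ≤ x)).card
      = (Finset.univ.filter (fun k => f k ≤ x)).card := by
  have : (Finset.image f Finset.univ).filter (· ≤ x)
      = Finset.image f (Finset.univ.filter (fun k => f k ≤ x)) := by
    ext y
    simp only [Finset.mem_filter, Finset.mem_image, Finset.mem_univ, true_and]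
    constructor
    · rintro ⟨⟨k, rfl⟩, hy⟩; exact ⟨k, ⟨hy, rfl⟩⟩
    · rintro ⟨k, hk, rfl⟩; exact ⟨⟨k, rfl⟩, hk⟩
  rw [this, Finset.card_image_of_injective _ hf]

-- the enumeration of a finset as an image
lemma eq_image_orderEmbOfFin {A : Finset ℕ} {s : ℕ} (h : A.card = s) :
    A = Finset.image (fun k => A.orderEmbOfFin h k) Finset.univ := by
  ext x
  simp only [Finset.mem_image, Finset.mem_univ, true_and]
  constructor
  · intro hx
    have : x ∈ Set.range (A.orderEmbOfFin h) := by
      rw [Finset.range_orderEmbOfFin]; exact hx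
    obtain ⟨k, hk⟩ := this
    exact ⟨k, hk⟩
  · rintro ⟨k, rfl⟩
    exact Finset.orderEmbOfFin_mem A h k

-- key: domination gives pointwise comparison of enumerations
lemma pointwise_of_dm {A B : Finset ℕ} {s : ℕ} (hA : A.card = s) (hB : B.card = s)
    (hD : Dm A B) (r : Fin s) : A.orderEmbOfFin hA r ≤ B.orderEmbOfFin hB r := by
  by_contra hcon
  push_neg at hcon
  set a := A.orderEmbOfFin hA with ha
  set b := B.orderEmbOfFin hB with hb
  have cA : ∀ x, (A.filter (· ≤ x)).card = (Finset.univ.filter (fun k => a k ≤ x)).card := by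
    intro x
    rw [eq_image_orderEmbOfFin hA, filter_image_card _ (A.orderEmbOfFin hA).injective x]
  have cB : ∀ x, (B.filter (· ≤ x)).card = (Finset.univ.filter (fun k => b k ≤ x)).card := by
    intro x
    rw [eq_image_orderEmbOfFin hB, filter_image_card _ (B.orderEmbOfFin hB).injective x]
  have hD' := hD (b r)
  rw [cA, cB] at hD'
  have e1 : Finset.univ.filter (fun k => b k ≤ b r) = Finset.univ.filter (fun k => k ≤ r) := by
    ext k; simp [b.le_iff_le]
  have e2 : Finset.univ.filter (fun k : Fin s => a k ≤ b r)
      ⊆ Finset.univ.filter (fun k => k < r) := by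
    intro k hk
    simp only [Finset.mem_filter, Finset.mem_univ, true_and] at hk ⊢
    have : a k < a r := lt_of_le_of_lt hk hcon
    exact a.strictMono.lt_iff_lt.1 this
  have e3 : Finset.univ.filter (fun k : Fin s => k ≤ r)
      = insert r (Finset.univ.filter (fun k => k < r)) := by
    ext k
    simp only [Finset.mem_filter, Finset.mem_univ, true_and, Finset.mem_insert]
    constructor
    · intro h; rcases eq_or_lt_of_le h with h | h
      · exact Or.inl h
      · exact Or.inr h
    · rintro (rfl | h)
      · exact le_refl _
      · exact le_of_lt h
  have e4 : r ∉ Finset.univ.filter (fun k : Fin s => k < r) := by simp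
  rw [e1, e3, Finset.card_insert_of_notMem e4] at hD'
  have := Finset.card_le_card e2
  omega

lemma PairData.jle {m s : ℕ} (d : PairData (m+1) s) (k : Fin s) : d.j k ≤ m := by
  have := d.hbound k; have := d.hipos k; omega

lemma PairData.ile {m s : ℕ} (d : PairData (m+1) s) (k : Fin s) : d.i k ≤ m := by
  have := d.hbound k; have := d.hjpos k; omega

lemma PairData.mpos {m s : ℕ} (d : PairData (m+1) s) (k : Fin s) : 0 < m := by
  have := d.hbound k; have := d.hipos k; have := d.hjpos k; omega

lemma toFun_mem {m s : ℕ} (d : PairData (m+1) s) :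
    (Finset.image (fun k => d.i k - 1) Finset.univ,
     Finset.image (fun k => m - d.j k) Finset.univ) ∈ Pp m s s := by
  have inj1 : Function.Injective (fun k => d.i k - 1) := by
    intro x y hxy
    simp only at hxy
    have hx := d.hipos x; have hy := d.hipos y
    exact d.hi.injective (by omega)
  have inj2 : Function.Injective (fun k => m - d.j k) := by
    intro x y hxy
    simp only at hxy
    have hx := d.jle x; have hy := d.jle y
    exact d.hj.injective (by omega)
  rw [mem_Pp]
  refine ⟨?_, ?_, ?_, ?_, ?_⟩
  · intro x hx
    obtain ⟨k, _, rfl⟩ := Finset.mem_image.1 hx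
    have := d.ile k; have := d.hipos k; have := d.mpos k
    exact Finset.mem_range.2 (by omega)
  · intro x hx
    obtain ⟨k, _, rfl⟩ := Finset.mem_image.1 hx
    have := d.hjpos k; have := d.mpos k
    exact Finset.mem_range.2 (by omega)
  · rw [Finset.card_image_of_injective _ inj1]; simp
  · rw [Finset.card_image_of_injective _ inj2]; simp
  · intro x
    rw [filter_image_card _ inj1 x, filter_image_card _ inj2 x]
    apply Finset.card_le_card
    intro k hk
    simp only [Finset.mem_filter, Finset.mem_univ, true_and] at hk ⊢
    have h1 := d.hbound k; have h2 := d.hipos k; have h3 := d.hjpos k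
    omega

noncomputable def mkPair (m s : ℕ) (A B : Finset ℕ) (hB : B ⊆ range m)
    (hcA : A.card = s) (hcB : B.card = s) (hD : Dm A B) : PairData (m+1) s where
  i := fun k => A.orderEmbOfFin hcA (Fin.rev k) + 1
  j := fun k => m - B.orderEmbOfFin hcB (Fin.rev k)
  hipos := fun k => by omega
  hjpos := fun k => by
    have h3 : B.orderEmbOfFin hcB (Fin.rev k) ∈ range m :=
      hB (Finset.orderEmbOfFin_mem B hcB _)
    have := Finset.mem_range.1 h3
    omega
  hi := by
    intro k l hkl
    have h1 : Fin.rev l < Fin.rev k := Fin.rev_lt_rev.2 hkl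
    have h2 := (A.orderEmbOfFin hcA).strictMono h1
    dsimp only
    omega
  hj := by
    intro k l hkl
    have h1 : Fin.rev l < Fin.rev k := Fin.rev_lt_rev.2 hkl
    have h2 := (B.orderEmbOfFin hcB).strictMono h1
    have h3 : B.orderEmbOfFin hcB (Fin.rev k) ∈ range m :=
      hB (Finset.orderEmbOfFin_mem B hcB _)
    have := Finset.mem_range.1 h3
    dsimp only
    omega
  hbound := fun k => by
    have h1 := pointwise_of_dm hcA hcB hD (Fin.rev k)
    have h3 : B.orderEmbOfFin hcB (Fin.rev k) ∈ range m :=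
      hB (Finset.orderEmbOfFin_mem B hcB _)
    have := Finset.mem_range.1 h3
    omega

noncomputable def pairEquiv (m s : ℕ) :
    PairData (m+1) s ≃ {p : Finset ℕ × Finset ℕ // p ∈ Pp m s s} where
  toFun d := ⟨_, toFun_mem d⟩
  invFun p := mkPair m s p.1.1 p.1.2 (mem_Pp.1 p.2).2.1 (mem_Pp.1 p.2).2.2.1
    (mem_Pp.1 p.2).2.2.2.1 (mem_Pp.1 p.2).2.2.2.2
  left_inv d := by
    apply PairData.ext'
    · funext k
      show Finset.orderEmbOfFin _ _ (Fin.rev k) + 1 = d.i k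
      have hmem : ∀ r : Fin s, d.i (Fin.rev r) - 1 ∈
          Finset.image (fun k => d.i k - 1) Finset.univ :=
        fun r => Finset.mem_image.2 ⟨Fin.rev r, Finset.mem_univ _, rfl⟩
      have hmono : StrictMono (fun r : Fin s => d.i (Fin.rev r) - 1) := by
        intro r r' hr
        have h1 : Fin.rev r' < Fin.rev r := Fin.rev_lt_rev.2 hr
        have h2 := d.hi h1
        have := d.hipos (Fin.rev r)
        dsimp only
        omega
      have := congrFun (Finset.orderEmbOfFin_unique
        ((mem_Pp.1 (toFun_mem d)).2.2.1) hmem hmono) (Fin.rev k)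
      rw [← this, Fin.rev_rev]
      have := d.hipos k
      omega
    · funext k
      show m - Finset.orderEmbOfFin _ _ (Fin.rev k) = d.j k
      have hmem : ∀ r : Fin s, m - d.j (Fin.rev r) ∈
          Finset.image (fun k => m - d.j k) Finset.univ :=
        fun r => Finset.mem_image.2 ⟨Fin.rev r, Finset.mem_univ _, rfl⟩
      have hmono : StrictMono (fun r : Fin s => m - d.j (Fin.rev r)) := by
        intro r r' hr
        have h1 : Fin.rev r' < Fin.rev r := Fin.rev_lt_rev.2 hr
        have h2 := d.hj h1
        have := d.jle (Fin.rev r)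
        dsimp only
        omega
      have := congrFun (Finset.orderEmbOfFin_unique
        ((mem_Pp.1 (toFun_mem d)).2.2.2.1) hmem hmono) (Fin.rev k)
      rw [← this, Fin.rev_rev]
      have := d.jle k
      omega
  right_inv p := by
    obtain ⟨⟨A, B⟩, hp⟩ := p
    apply Subtype.ext
    obtain ⟨hA, hB, hcA, hcB, hD⟩ := mem_Pp.1 hp
    apply Prod.ext
    · show Finset.image (fun k => A.orderEmbOfFin hcA (Fin.rev k) + 1 - 1) Finset.univ = A
      have e : (fun k : Fin s => A.orderEmbOfFin hcA (Fin.rev k) + 1 - 1)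
          = fun k => A.orderEmbOfFin hcA (Fin.rev k) := by funext r; omega
      rw [e, image_rev, ← eq_image_orderEmbOfFin hcA]
    · show Finset.image (fun k => m - (m - B.orderEmbOfFin hcB (Fin.rev k))) Finset.univ = B
      have e : (fun k : Fin s => m - (m - B.orderEmbOfFin hcB (Fin.rev k)))
          = fun k => B.orderEmbOfFin hcB (Fin.rev k) := by
        funext r
        have : B.orderEmbOfFin hcB (Fin.rev r) ∈ range m :=
          hB (Finset.orderEmbOfFin_mem B hcB _)
        have := Finset.mem_range.1 this
        omega
      rw [e, image_rev, ← eq_image_orderEmbOfFin hcB]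

lemma card_pairData_succ (m s : ℕ) : Nat.card (PairData (m+1) s) = (Pp m s s).card := by
  rw [Nat.card_congr (pairEquiv m s), Nat.card_eq_finsetCard]

lemma choose_id4 (m t : ℕ) :
    (m+1) * (Nat.choose m (t+1) * Nat.choose m (t+1))
      = Nat.choose (m+1) (t+1) * Nat.choose (m+1) (t+2)
        + (m+1) * (Nat.choose m (t+2) * Nat.choose m t) := by
  have h2 : (m+1) * Nat.choose m t = Nat.choose (m+1) (t+1) * (t+1) :=
    Nat.add_one_mul_choose_eq m t
  have h4 : Nat.choose m (t+2) * (t+2) + Nat.choose m (t+1) * (t+1) = Nat.choose m (t+1) * m := by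
    have h : Nat.choose m (t+2) * (t+2) = Nat.choose m (t+1) * (m - (t+1)) :=
      Nat.choose_succ_right_eq m (t+1)
    rcases le_or_gt (t+1) m with hle | hlt
    · rw [h, ← Nat.mul_add]
      congr 1
      omega
    · have e1 : Nat.choose m (t+1) = 0 := Nat.choose_eq_zero_of_lt hlt
      have e2 : Nat.choose m (t+2) = 0 := Nat.choose_eq_zero_of_lt (by omega)
      simp [e1, e2]
  have hp1 : Nat.choose (m+1) (t+2) = Nat.choose m (t+1) + Nat.choose m (t+2) := by
    rw [show t+2 = (t+1)+1 from rfl, Nat.choose_succ_succ]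
  have hp2 : Nat.choose (m+1) (t+1) = Nat.choose m t + Nat.choose m (t+1) :=
    Nat.choose_succ_succ m t
  rw [hp2] at h2
  rw [hp1, hp2]
  zify at h2 h4 ⊢
  linear_combination (-((Nat.choose m (t+1) : ℤ) + (Nat.choose m (t+2) : ℤ))) * h2
    - ((Nat.choose m t : ℤ) + (Nat.choose m (t+1) : ℤ)) * h4

lemma part2 (n s : ℕ) : n * Nat.card (PairData n s) = n.choose s * n.choose (s+1) := by
  cases n with
  | zero => simp
  | succ m =>
    rw [card_pairData_succ]
    cases s with
    | zero =>
      rw [Pp_zero_right]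
      simp [Nat.choose_one_right]
    | succ t =>
      have hB := Pp_count m (t+1) t (Nat.le_succ t)
      simp only [show t+1+1 = t+2 from rfl] at hB
      have hI := choose_id4 m t
      have key := congrArg (fun z => (m+1) * z) hB
      simp only [Nat.mul_add] at key
      rw [hI] at key
      exact Nat.add_right_cancel key

lemma j_lb {n s : ℕ} (d : PairData n s) : ∀ v (hv : v < s), v < d.j ⟨v, hv⟩ := by
  intro v
  induction v with
  | zero => intro hv; exact d.hjpos _
  | succ w ih =>
    intro hv
    have h1 : w < s := by omega
    have h2 := ih h1
    have h3 : (⟨w, h1⟩ : Fin s) < ⟨w+1, hv⟩ := by simp [Fin.lt_def]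
    have h4 := d.hj h3
    omega

lemma s_le_n {n s : ℕ} (d : PairData n s) : s ≤ n := by
  by_contra h
  push_neg at h
  have hs : 0 < s := by omega
  have h1 := j_lb d (s-1) (by omega)
  have h2 := d.hipos ⟨s-1, by omega⟩
  have h3 := d.hbound ⟨s-1, by omega⟩
  omega

instance pdFinite (n s : ℕ) : Finite (PairData n s) := by
  apply Finite.of_injective (fun d : PairData n s =>
    ((fun k => ⟨d.i k, by have := d.hbound k; have := d.hjpos k; omega⟩,
      fun k => ⟨d.j k, by have := d.hbound k; have := d.hipos k; omega⟩) :
      (Fin s → Fin (n+1)) × (Fin s → Fin (n+1))))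
  intro d e h
  simp only [Prod.mk.injEq, funext_iff, Fin.mk.injEq] at h
  exact PairData.ext' (funext h.1) (funext h.2)

def sigmaEquiv (n : ℕ) : (Σ s : ℕ, PairData n s) ≃ Σ s : Fin (n+1), PairData n s.1 where
  toFun p := ⟨⟨p.1, Nat.lt_succ_of_le (s_le_n p.2)⟩, p.2⟩
  invFun p := ⟨p.1.1, p.2⟩
  left_inv p := rfl
  right_inv p := rfl

lemma card_sigma_eq (n : ℕ) :
    Nat.card (Σ s : ℕ, PairData n s) = ∑ s ∈ range (n+1), Nat.card (PairData n s) := by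
  classical
  haveI : ∀ s : ℕ, Fintype (PairData n s) := fun s => Fintype.ofFinite _
  rw [Nat.card_congr (sigmaEquiv n), Nat.card_eq_fintype_card, Fintype.card_sigma]
  rw [Fin.sum_univ_eq_sum_range (fun s => Fintype.card (PairData n s))]
  exact Finset.sum_congr rfl (fun k _ => (Nat.card_eq_fintype_card).symm)

lemma sum_narayana (n : ℕ) :
    ∑ s ∈ range (n+1), n.choose s * n.choose (s+1) = (n+n).choose (n+1) := by
  have hvan := Nat.add_choose_eq n n (n+1)
  rw [Finset.Nat.sum_antidiagonal_eq_sum_range_succ_mk] at hvan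
  simp only [Nat.succ_eq_add_one] at hvan
  rw [Finset.sum_range_succ, Nat.choose_eq_zero_of_lt (by omega : n < n+1),
    Nat.zero_mul, Nat.add_zero] at hvan
  rw [hvan, ← Finset.sum_range_reflect, Nat.add_zero]
  apply Finset.sum_congr rfl
  intro j hj
  have hj' : j ≤ n := by
    have := Finset.mem_range.1 hj; omega
  rw [show n+1-1-j = n-j from by omega, Nat.choose_symm hj',
    show n-j+1 = n+1-j from by omega]

lemma catalan_eq (n : ℕ) : n * catalan n = (n+n).choose (n+1) := by
  have hc := succ_mul_catalan_eq_centralBinom n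
  have hb : Nat.centralBinom n = (n+n).choose n := by
    rw [Nat.centralBinom, two_mul]
  have hr : (n+n).choose (n+1) * (n+1) = (n+n).choose n * (n+n-n) :=
    Nat.choose_succ_right_eq (n+n) n
  have e : n + n - n = n := by omega
  rw [e] at hr
  apply Nat.eq_of_mul_eq_mul_left (show 0 < n+1 by omega)
  calc (n+1) * (n * catalan n) = n * ((n+1) * catalan n) := by ring
  _ = n * (n+n).choose n := by rw [hc, hb]
  _ = (n+n).choose n * n := Nat.mul_comm _ _
  _ = (n+n).choose (n+1) * (n+1) := hr.symm
  _ = (n+1) * ((n+n).choose (n+1)) := Nat.mul_comm _ _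

lemma part1 (n : ℕ) : Nat.card (Σ s : ℕ, PairData n s) = catalan n := by
  cases n with
  | zero =>
    rw [card_sigma_eq]
    rw [show (0:ℕ)+1 = 1 from rfl, Finset.sum_range_one]
    haveI : Unique (PairData 0 0) :=
      { default :=
        { i := fun k => k.elim0
          j := fun k => k.elim0
          hipos := fun k => k.elim0
          hjpos := fun k => k.elim0
          hi := fun a => a.elim0
          hj := fun a => a.elim0
          hbound := fun k => k.elim0 }
        uniq := fun d => (PairData.ext' (funext fun k => k.elim0)
          (funext fun k => k.elim0)).symm }
    rw [Nat.card_unique, catalan_zero]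
  | succ m =>
    set n := m + 1
    apply Nat.eq_of_mul_eq_mul_left (show 0 < n by omega)
    rw [card_sigma_eq, Finset.mul_sum]
    rw [Finset.sum_congr rfl (fun s _ => part2 n s)]
    rw [sum_narayana, catalan_eq]

/-- The `n`th Catalan number counts the pairs of sequences described above (of arbitrary
common length), and for fixed length `s` the number of such pairs is the Narayana number
`N(n, s+1) = (1/n) * C(n,s) * C(n,s+1)` (stated in the division-free form). -/
theorem catalan_counts_pairs (n : ℕ) :
    Nat.card ((s : ℕ) × PairData n s) = catalan n ∧
    ∀ s : ℕ, n * Nat.card (PairData n s) = n.choose s * n.choose (s + 1) := by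
  exact ⟨part1 n, fun s => part2 n s⟩
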